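/- For every real x > 0, ln x − 1/x < ψ(x) < ln x − 1/(2x), where ψ = Γ'/Γ is the digamma function. -/

import Mathlib

open Set Filter

/-- The digamma function ψ(x) = d/dx ln Γ(x). -/
noncomputable def digamma (x : ℝ) : ℝ :=
  deriv (fun y => Real.log (Real.Gamma y)) x

private lemma logGamma_diff {x : ℝ} (hx : 0 < x) :
    DifferentiableAt ℝ (fun y => Real.log (Real.Gamma y)) x :=
  (Real.differentiableAt_Gamma fun m => by
      have : (0:ℝ) ≤ m := Nat.cast_nonneg m
      exact ne_of_gt (by linarith)).log (Real.Gamma_pos_of_pos hx).ne'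

/-- Recurrence for the digamma function. -/
private lemma digamma_rec {x : ℝ} (hx : 0 < x) : digamma (x + 1) = digamma x + 1 / x := by
  have h1 : digamma (x + 1) = deriv (fun y => Real.log (Real.Gamma (y + 1))) x := by
    rw [digamma, ← deriv_comp_add_const]
  have h2 : (fun y => Real.log (Real.Gamma (y + 1))) =ᶠ[nhds x]
      (fun y => Real.log (Real.Gamma y) + Real.log y) := by
    filter_upwards [eventually_gt_nhds hx] with y hy
    rw [Real.Gamma_add_one hy.ne', Real.log_mul hy.ne' (Real.Gamma_pos_of_pos hy).ne', add_comm]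
  rw [h1, h2.deriv_eq, deriv_fun_add (logGamma_diff hx) (Real.differentiableAt_log hx.ne'),
    Real.deriv_log, digamma, one_div]

/-- Convexity upper bound: ψ(y) ≤ log y. -/
private lemma digamma_le_log {y : ℝ} (hy : 0 < y) : digamma y ≤ Real.log y := by
  have hc := Real.convexOn_log_Gamma
  have h := hc.deriv_le_slope (mem_Ioi.mpr hy) (mem_Ioi.mpr (by linarith : (0:ℝ) < y + 1))
    (by linarith) (logGamma_diff hy)
  rw [slope_def_field] at h
  have hslope : ((Real.log ∘ Real.Gamma) (y + 1) - (Real.log ∘ Real.Gamma) y) / (y + 1 - y)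
      = Real.log y := by
    simp only [Function.comp_apply, Real.Gamma_add_one hy.ne',
      Real.log_mul hy.ne' (Real.Gamma_pos_of_pos hy).ne']
    field_simp
    ring
  rw [hslope] at h
  exact h

/-- Convexity lower bound: log y ≤ ψ(y+1). -/
private lemma log_le_digamma {y : ℝ} (hy : 0 < y) : Real.log y ≤ digamma (y + 1) := by
  have hc := Real.convexOn_log_Gamma
  have h := hc.slope_le_deriv (mem_Ioi.mpr hy) (mem_Ioi.mpr (by linarith : (0:ℝ) < y + 1))
    (by linarith) (logGamma_diff (by linarith : (0:ℝ) < y + 1))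
  rw [slope_def_field] at h
  have hslope : ((Real.log ∘ Real.Gamma) (y + 1) - (Real.log ∘ Real.Gamma) y) / (y + 1 - y)
      = Real.log y := by
    simp only [Function.comp_apply, Real.Gamma_add_one hy.ne',
      Real.log_mul hy.ne' (Real.Gamma_pos_of_pos hy).ne']
    field_simp
    ring
  rw [hslope] at h
  exact h

/-- Strict lower tangent bound: 1/(y+1) < log(y+1) - log y. -/
private lemma one_div_lt_log_sub {y : ℝ} (hy : 0 < y) :
    1 / (y + 1) < Real.log (y + 1) - Real.log y := by
  rw [← Real.log_div (by linarith) hy.ne']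
  rw [Real.lt_log_iff_exp_lt (by positivity)]
  set s : ℝ := 1 / (y + 1) with hs
  have hs0 : 0 < s := by positivity
  have h1 : -s + 1 < Real.exp (-s) := Real.add_one_lt_exp (by linarith : -s ≠ 0)
  rw [Real.exp_neg] at h1
  have h1s : 0 < 1 - s := by
    rw [hs]
    have : 1 / (y + 1) < 1 := by
      rw [div_lt_one (by linarith)]; linarith
    linarith
  have h2 : (1 - s) * Real.exp s < 1 := by
    have := mul_lt_mul_of_pos_right (by linarith : 1 - s < (Real.exp s)⁻¹) (Real.exp_pos s)
    rwa [inv_mul_cancel₀ (Real.exp_pos s).ne'] at this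
  have h3 : Real.exp s < 1 / (1 - s) := by
    rw [lt_div_iff₀ h1s, mul_comm]
    exact h2
  have h4 : 1 / (1 - s) = (y + 1) / y := by
    rw [hs]; field_simp
    rw [add_sub_cancel_right, div_self hy.ne']
  rw [h4] at h3
  exact h3

/-- Strict trapezoid inequality: log(1+t) < t/2 + t/(2(1+t)) for t > 0. -/
private lemma log_lt_trap {t : ℝ} (ht : 0 < t) :
    Real.log (1 + t) < t / 2 + t / (2 * (1 + t)) := by
  set h : ℝ → ℝ := fun s => s / 2 + s / (2 * (1 + s)) - Real.log (1 + s) with hh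
  have hd : ∀ s : ℝ, 0 ≤ s → HasDerivAt h (s ^ 2 / (2 * (1 + s) ^ 2)) s := by
    intro s hs
    have hs1 : (0:ℝ) < 1 + s := by linarith
    have d1 : HasDerivAt (fun u : ℝ => u / 2) (1 / 2) s := by
      simpa using (hasDerivAt_id s).div_const 2
    have d2 : HasDerivAt (fun u : ℝ => u / (2 * (1 + u)))
        ((1 * (2 * (1 + s)) - s * 2) / (2 * (1 + s)) ^ 2) s := by
      refine (hasDerivAt_id s).div ?_ (by positivity)
      have : HasDerivAt (fun u : ℝ => 2 * (1 + u)) 2 s := by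
        simpa using ((hasDerivAt_id s).const_add 1).const_mul 2
      exact this
    have d3 : HasDerivAt (fun u : ℝ => Real.log (1 + u)) (1 / (1 + s)) s := by
      have : HasDerivAt (fun u : ℝ => 1 + u) 1 s := by
        simpa using (hasDerivAt_id s).const_add 1
      simpa using this.log hs1.ne'
    have := (d1.add d2).sub d3
    refine this.congr_deriv ?_
    field_simp
    ring
  have hmono : StrictMonoOn h (Ici 0) := by
    refine strictMonoOn_of_deriv_pos (convex_Ici 0) ?_ ?_
    · intro s hs
      exact ((hd s hs).differentiableAt).continuousAt.continuousWithinAt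
    · intro s hs
      rw [interior_Ici] at hs
      rw [(hd s (le_of_lt hs)).deriv]
      have hs' : (0:ℝ) < s := hs
      exact div_pos (pow_pos hs' 2) (by positivity)
  have h0 : h 0 = 0 := by simp [hh]
  have := hmono (self_mem_Ici) (mem_Ici.mpr ht.le) ht
  rw [h0] at this
  simp only [hh] at this
  linarith

/-- Trapezoid in the needed form: log(y+1) - log y < 1/(2y) + 1/(2(y+1)). -/
private lemma log_sub_lt_trap {y : ℝ} (hy : 0 < y) :
    Real.log (y + 1) - Real.log y < 1 / (2 * y) + 1 / (2 * (y + 1)) := by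
  have h := log_lt_trap (t := 1 / y) (by positivity)
  have e1 : (1:ℝ) + 1 / y = (y + 1) / y := by field_simp
  have e2 : Real.log ((y + 1) / y) = Real.log (y + 1) - Real.log y :=
    Real.log_div (by linarith) hy.ne'
  rw [e1, e2] at h
  have e3 : 1 / y / 2 + 1 / y / (2 * ((y + 1) / y)) = 1 / (2 * y) + 1 / (2 * (y + 1)) := by
    field_simp
  rw [e3] at h
  exact h

/-- For every real x > 0, ln x − 1/x < ψ(x) < ln x − 1/(2x). -/
theorem digamma_bounds (x : ℝ) (hx : 0 < x) :
    Real.log x - 1 / x < digamma x ∧ digamma x < Real.log x - 1 / (2 * x) := by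
  have hx1 : (0:ℝ) < x + 1 := by linarith
  constructor
  · -- lower bound
    have hrec1 : digamma (x + 1) = digamma x + 1 / x := digamma_rec hx
    have hrec2 : digamma (x + 1 + 1) = digamma (x + 1) + 1 / (x + 1) := digamma_rec hx1
    have hlog : Real.log (x + 1) ≤ digamma (x + 1 + 1) := log_le_digamma hx1
    have hstr : 1 / (x + 1) < Real.log (x + 1) - Real.log x := one_div_lt_log_sub hx
    linarith
  · -- upper bound
    set δ : ℝ := 1 / (2 * x) + 1 / (2 * (x + 1)) - (Real.log (x + 1) - Real.log x) with hδ
    have hδpos : 0 < δ := by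
      have := log_sub_lt_trap hx
      rw [hδ]; linarith
    have key : ∀ n : ℕ, digamma x ≤ digamma (x + n + 1) - Real.log (x + n + 1)
        + Real.log x - 1 / (2 * x) - δ + 1 / (2 * (x + n + 1)) := by
      intro n
      induction n with
      | zero =>
        simp only [Nat.cast_zero, add_zero]
        have hrec1 : digamma (x + 1) = digamma x + 1 / x := digamma_rec hx
        rw [hδ]
        have h2x : 1 / x = 1 / (2 * x) + 1 / (2 * x) := by field_simp; ring
        linarith
      | succ n ih =>
        have hy : (0:ℝ) < x + n + 1 := by positivity
        have hrec : digamma (x + n + 1 + 1) = digamma (x + n + 1) + 1 / (x + n + 1) :=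
          digamma_rec hy
        have htrap : Real.log (x + n + 1 + 1) - Real.log (x + n + 1)
            < 1 / (2 * (x + n + 1)) + 1 / (2 * (x + n + 1 + 1)) := log_sub_lt_trap hy
        have hcast : x + ((n : ℝ) + 1) + 1 = x + n + 1 + 1 := by ring
        have h2y : 1 / (x + (n:ℝ) + 1) = 1 / (2 * (x + (n:ℝ) + 1)) + 1 / (2 * (x + (n:ℝ) + 1)) := by
          field_simp
          norm_num
        push_cast
        rw [hcast]
        linarith
    obtain ⟨n, hn⟩ := exists_nat_gt (1 / (2 * δ))
    have hy : (0:ℝ) < x + n + 1 := by positivity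
    have h1 : digamma (x + n + 1) ≤ Real.log (x + n + 1) := digamma_le_log hy
    have h2 : 1 / (2 * (x + n + 1)) < δ := by
      rw [div_lt_iff₀ (by positivity)]
      have h3 : 1 / δ < 2 * (x + n + 1) := by
        have : 1 / δ = 2 * (1 / (2 * δ)) := by field_simp
        rw [this]
        have : (n:ℝ) ≤ x + n + 1 := by linarith [Nat.cast_nonneg (α := ℝ) n]
        linarith
      calc (1:ℝ) = δ * (1 / δ) := by field_simp
        _ < δ * (2 * (x + n + 1)) := by
            exact mul_lt_mul_of_pos_left h3 hδpos
    have := key n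
    linarith
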